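/- With the setting of the previous lemma and ψ the identity, E_{(a,b)∼p⊗p}[ĉ_i(a,b)] = x i - ∑_j p j · x j, i.e., the expectation of the estimator ĉ_i equals the expected instantaneous regret of the sampling distribution p against arm i. -/

import Mathlib

open Finset

theorem expectation_chat_identity (K : ℕ) (hK : 1 ≤ K)
    (p : Fin K → ℝ) (hp : ∀ i, 0 < p i) (hps : ∑ i, p i = 1)
    (x : Fin K → ℝ)
    (c : Fin K → Fin K → Fin K → ℝ)
    (hc : ∀ i a b, c i a b = (if i = a then (1:ℝ) else 0) * (x a - x b) / (2 * p a)
                          + (if i = b then (1:ℝ) else 0) * (x b - x a) / (2 * p b))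
    (i : Fin K) :
    ∑ a, ∑ b, p a * p b * c i a b = x i - ∑ j, p j * x j := by
  have key : ∀ a b : Fin K, p a * p b * c i a b =
      (if a = i then p b * (x i - x b) / 2 else 0)
      + (if b = i then p a * (x i - x a) / 2 else 0) := by
    intro a b
    rw [hc]
    have ha := (hp a).ne'
    have hb := (hp b).ne'
    rcases eq_or_ne i a with h1 | h1 <;> rcases eq_or_ne i b with h2 | h2
    · subst h1; subst h2; simp
    · subst h1
      simp [h2, Ne.symm h2]
      field_simp
    · subst h2
      simp [h1, Ne.symm h1]
      field_simp
    · simp [h1, h2, Ne.symm h1, Ne.symm h2]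
  have step : ∑ a, ∑ b, p a * p b * c i a b
      = (∑ b, p b * (x i - x b) / 2) + (∑ a, p a * (x i - x a) / 2) := by
    simp only [key, Finset.sum_add_distrib]
    congr 1
    · rw [Finset.sum_comm]
      simp [Finset.sum_ite_eq']
    · simp [Finset.sum_ite_eq']
  have hsum : ∑ b, p b * (x i - x b) / 2 = (x i - ∑ j, p j * x j) / 2 := by
    rw [← Finset.sum_div]
    congr 1
    have : ∀ b, p b * (x i - x b) = p b * x i - p b * x b := fun b => by ring
    simp only [this]
    rw [Finset.sum_sub_distrib, ← Finset.sum_mul, hps, one_mul]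
  rw [step, hsum]
  ring
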